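/- For every τ in the upper half-plane, γ ∈ ℂ, z ∈ ℂ and λ ∈ ℂ^N, with η = γ/2, the elliptic R-matrix satisfies the quasi-periodicity R(z+τ,λ) = exp(−4πiη)·exp(2πi(ηC₀ + λ^{(1)}))·R(z,λ)·exp(2πi(ηC₀ − λ^{(1)})), where C₀ = ∑_i E_{ii}⊗E_{ii} and λ^{(1)} = ∑_i λ_i·E_{ii}⊗1 are diagonal matrices, so the conjugating factors are the diagonal matrices with entry exp(2πi(η·δ_{ij} ± λ_i)) at position (i,j) (the identity holds unconditionally, using Lean's convention that division by zero is zero). -/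

import Mathlib

open Complex

/-- Jacobi's theta function `θ₁(t|τ)`. -/
noncomputable def theta1 (τ t : ℂ) : ℂ :=
  -∑' j : ℤ, Complex.exp ((Real.pi : ℂ) * Complex.I * ((j : ℂ) + 1/2)^2 * τ +
      2 * (Real.pi : ℂ) * Complex.I * ((j : ℂ) + 1/2) * (t + 1/2))

/-- The derivative `θ₁'(t|τ)` of `θ₁` in `t`. -/
noncomputable def theta1' (τ t : ℂ) : ℂ := deriv (theta1 τ) t

/-- `ρ(t) = θ₁'(t|τ)/θ₁(t|τ)`. -/
noncomputable def rho (τ t : ℂ) : ℂ := theta1' τ t / theta1 τ t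

/-- `σ(w,t) = θ₁(w−t|τ)·θ₁'(0|τ)/(θ₁(w|τ)·θ₁(t|τ))`. -/
noncomputable def sigma (τ w t : ℂ) : ℂ :=
  theta1 τ (w - t) * theta1' τ 0 / (theta1 τ w * theta1 τ t)

open Matrix Kronecker

/-- The matrix unit `E_{ij}`. -/
noncomputable def Em {N : ℕ} (i j : Fin N) : Matrix (Fin N) (Fin N) ℂ :=
  Matrix.single i j 1

/-- The elliptic dynamical R-matrix
`R(z,λ) = ∑_i E_{ii}⊗E_{ii} + ∑_{i≠j} (σ(γ,λ_{ij})/σ(γ,z))·E_{ii}⊗E_{jj}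
        + ∑_{i≠j} (σ(λ_{ij},z)/σ(γ,z))·E_{ij}⊗E_{ji}`. -/
noncomputable def Rmat (τ γ : ℂ) {N : ℕ} (z : ℂ) (lam : Fin N → ℂ) :
    Matrix (Fin N × Fin N) (Fin N × Fin N) ℂ :=
  (∑ i : Fin N, Em i i ⊗ₖ Em i i) +
  (∑ i : Fin N, ∑ j : Fin N,
    (if i = j then 0 else sigma τ γ (lam i - lam j) / sigma τ γ z) • (Em i i ⊗ₖ Em j j)) +
  (∑ i : Fin N, ∑ j : Fin N,
    (if i = j then 0 else sigma τ (lam i - lam j) z / sigma τ γ z) • (Em i j ⊗ₖ Em j i))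

/-- The flip matrix `P_{(i,j),(k,l)} = δ_{il}·δ_{jk}`. -/
def Pflip (N : ℕ) : Matrix (Fin N × Fin N) (Fin N × Fin N) ℂ :=
  Matrix.of fun p q => if p.1 = q.2 ∧ p.2 = q.1 then 1 else 0

/-! ### Auxiliary lemmas -/

lemma exp_neg_pi_mul_I' : Complex.exp (-((Real.pi:ℂ) * Complex.I)) = -1 := by
  rw [Complex.exp_neg, Complex.exp_pi_mul_I]; norm_num

/-- Quasi-periodicity of `θ₁` under `t ↦ t + τ`. -/
lemma theta1_add_right (τ t : ℂ) :
    theta1 τ (t + τ) =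
      -Complex.exp (-((Real.pi:ℂ) * Complex.I * τ) - 2 * (Real.pi:ℂ) * Complex.I * t) *
        theta1 τ t := by
  set f : ℤ → ℂ := fun j => Complex.exp ((Real.pi : ℂ) * Complex.I * ((j : ℂ) + 1/2)^2 * τ +
      2 * (Real.pi : ℂ) * Complex.I * ((j : ℂ) + 1/2) * (t + 1/2)) with hf
  have key : ∀ j : ℤ, Complex.exp ((Real.pi : ℂ) * Complex.I * ((j : ℂ) + 1/2)^2 * τ +
      2 * (Real.pi : ℂ) * Complex.I * ((j : ℂ) + 1/2) * ((t + τ) + 1/2)) =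
      -Complex.exp (-((Real.pi:ℂ) * Complex.I * τ) - 2 * (Real.pi:ℂ) * Complex.I * t) *
        f (j + 1) := by
    intro j
    rw [hf]
    simp only []
    rw [neg_mul, ← Complex.exp_add, ← neg_one_mul, ← exp_neg_pi_mul_I', ← Complex.exp_add]
    congr 1
    push_cast
    ring
  have hre : ∑' j : ℤ, f (j + 1) = ∑' j : ℤ, f j :=
    (Equiv.addRight (1:ℤ)).tsum_eq f
  calc theta1 τ (t + τ)
      = -∑' j : ℤ, (-Complex.exp (-((Real.pi:ℂ) * Complex.I * τ) -
          2 * (Real.pi:ℂ) * Complex.I * t) * f (j + 1)) := by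
        rw [theta1]; exact congrArg Neg.neg (tsum_congr key)
    _ = -(-Complex.exp (-((Real.pi:ℂ) * Complex.I * τ) - 2 * (Real.pi:ℂ) * Complex.I * t) *
          ∑' j : ℤ, f (j + 1)) := by rw [tsum_mul_left]
    _ = -Complex.exp (-((Real.pi:ℂ) * Complex.I * τ) - 2 * (Real.pi:ℂ) * Complex.I * t) *
          theta1 τ t := by
        rw [hre, theta1, ← hf]; ring

/-- Quasi-periodicity of `θ₁` under `t ↦ t - τ`. -/
lemma theta1_sub_right (τ t : ℂ) :
    theta1 τ (t - τ) =
      -Complex.exp (-((Real.pi:ℂ) * Complex.I * τ) + 2 * (Real.pi:ℂ) * Complex.I * t) *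
        theta1 τ t := by
  have h := theta1_add_right τ (t - τ)
  rw [sub_add_cancel] at h
  rw [h]
  rw [neg_mul, neg_mul, mul_neg, ← mul_assoc, ← Complex.exp_add]
  rw [show (-((Real.pi:ℂ) * Complex.I * τ) + 2 * (Real.pi:ℂ) * Complex.I * t) +
      (-((Real.pi:ℂ) * Complex.I * τ) - 2 * (Real.pi:ℂ) * Complex.I * (t - τ)) = 0 by ring,
    Complex.exp_zero, one_mul, neg_neg]

private lemma hdiv_aux (A B X W Z : ℂ) :
    -A * X / (W * (-B * Z)) = (A / B) * (X / (W * Z)) := by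
  rw [show W * (-B * Z) = -(B * (W * Z)) by ring, show -A * X = -(A * X) by ring,
    neg_div_neg_eq, mul_div_mul_comm]

/-- Quasi-periodicity of `σ(w,·)` under `z ↦ z + τ`. -/
lemma sigma_add_snd (τ w z : ℂ) :
    sigma τ w (z + τ) = Complex.exp (2 * (Real.pi:ℂ) * Complex.I * w) * sigma τ w z := by
  unfold sigma
  rw [show w - (z + τ) = (w - z) - τ by ring, theta1_sub_right, theta1_add_right,
    neg_mul, neg_mul, mul_assoc, ← neg_mul, hdiv_aux, ← Complex.exp_sub]
  congr 2
  ring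

/-- Entrywise description of the R-matrix. -/
lemma Rmat_apply (τ γ : ℂ) {N : ℕ} (z : ℂ) (lam : Fin N → ℂ) (a b c d : Fin N) :
    Rmat τ γ z lam (a, b) (c, d) =
      (if a = b ∧ b = c ∧ c = d then 1 else 0) +
      (if a = c ∧ b = d ∧ ¬ a = b then sigma τ γ (lam a - lam b) / sigma τ γ z else 0) +
      (if a = d ∧ b = c ∧ ¬ a = b then sigma τ (lam a - lam b) z / sigma τ γ z else 0) := by
  simp only [Rmat, Em, Matrix.add_apply, Matrix.sum_apply, Matrix.smul_apply,
    Matrix.kroneckerMap_apply, Matrix.single, Matrix.of_apply, smul_eq_mul,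
    mul_ite, ite_mul, mul_one, one_mul, mul_zero, zero_mul]
  congr 1
  · congr 1
    · rw [Finset.sum_eq_single a] <;> aesop
    · rw [Finset.sum_eq_single a]
      · rw [Finset.sum_eq_single b] <;> aesop
      · intro i _ hi
        rw [Finset.sum_eq_zero]; aesop
      · simp
  · rw [Finset.sum_eq_single a]
    · rw [Finset.sum_eq_single b] <;> aesop
    · intro i _ hi
      rw [Finset.sum_eq_zero]; aesop
    · simp

private lemma quasi_helper (x y D E A B C : ℂ) (h : D - E = A + B + C) :
    (Complex.exp D * x) / (Complex.exp E * y) =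
      Complex.exp A * (Complex.exp B * (x / y) * Complex.exp C) := by
  rw [mul_div_mul_comm, ← Complex.exp_sub, h, Complex.exp_add, Complex.exp_add]
  ring

private lemma quasi_helper0 (x y E A B C : ℂ) (h : -E = A + B + C) :
    x / (Complex.exp E * y) = Complex.exp A * (Complex.exp B * (x / y) * Complex.exp C) := by
  have := quasi_helper x y 0 E A B C (by rw [zero_sub, h])
  rwa [Complex.exp_zero, one_mul] at this

/-- quasi-periodicity of the elliptic R-matrix under `z ↦ z + τ`,
with `η = γ/2`:
`R(z+τ,λ) = e^{−4πiη}·exp(2πi(ηC₀+λ^{(1)}))·R(z,λ)·exp(2πi(ηC₀−λ^{(1)}))`. -/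
theorem Rmat_quasi_periodic (τ : ℂ) (hτ : 0 < τ.im) (γ : ℂ) (N : ℕ) (hN : 2 ≤ N)
    (z : ℂ) (lam : Fin N → ℂ) :
    Rmat τ γ (z + τ) lam =
      Complex.exp (-(4 * (Real.pi : ℂ) * Complex.I * (γ / 2))) •
      (Matrix.diagonal (fun p : Fin N × Fin N =>
          Complex.exp (2 * (Real.pi : ℂ) * Complex.I *
            ((γ / 2) * (if p.1 = p.2 then 1 else 0) + lam p.1))) *
        Rmat τ γ z lam *
        Matrix.diagonal (fun p : Fin N × Fin N =>
          Complex.exp (2 * (Real.pi : ℂ) * Complex.I *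
            ((γ / 2) * (if p.1 = p.2 then 1 else 0) - lam p.1)))) := by
  ext ⟨a, b⟩ ⟨c, d⟩
  rw [Matrix.smul_apply, Matrix.mul_diagonal, Matrix.diagonal_mul, Rmat_apply, Rmat_apply,
    sigma_add_snd τ γ z, sigma_add_snd τ (lam a - lam b) z]
  dsimp only
  split_ifs <;> try simp_all
  · symm
    rw [← Complex.exp_add, ← Complex.exp_add]
    convert Complex.exp_zero using 2
    ring
  · exact quasi_helper0 _ _ _ _ _ _ (by ring)
  · exact quasi_helper _ _ _ _ _ _ _ (by ring)
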